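/- For every integer m ≥ 1, every real q > 1, and all real x, y, one has ∑_{k=0}^{m} [m choose k]_q · q^{-(m-1)(m-k)/2} · B_{m-k}(y|q) · H_k(x|q) = ∏_{j=1}^{i} v_{2j-1}(x, -y, q) if m = 2i, and = ∏_{j=0}^{i} v_{2j}(x, -y, q) if m = 2i+1. -/

import Mathlib

/-- `[n]_q = 1 + q + ⋯ + q^{n-1}`. -/
def qInt (q : ℝ) (n : ℕ) : ℝ := ∑ i ∈ Finset.range n, q ^ i

/-- `[n]_q! = [1]_q·[2]_q⋯[n]_q`. -/
def qFact (q : ℝ) (n : ℕ) : ℝ := ∏ i ∈ Finset.range n, qInt q (i + 1)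

/-- The `q`-binomial coefficient `[m choose k]_q = [m]_q!/([k]_q!·[m-k]_q!)`. -/
noncomputable def qBinomF (q : ℝ) (m k : ℕ) : ℝ := qFact q m / (qFact q k * qFact q (m - k))

/-- The `q`-Hermite polynomials `H_n(x|q)`:
`H_0 = 1`, `H_1 = x`, `H_{n+2} = x·H_{n+1} - [n+1]_q·H_n`. -/
noncomputable def Hq (q x : ℝ) : ℕ → ℝ
  | 0 => 1
  | 1 => x
  | n + 2 => x * Hq q x (n + 1) - qInt q (n + 1) * Hq q x n

/-- The polynomials `B_n(y|q)`:
`B_0 = 1`, `B_1 = -y`, `B_{n+2} = -q^{n+1}y·B_{n+1} + q^n·[n+1]_q·B_n`. -/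
noncomputable def Bq (q y : ℝ) : ℕ → ℝ
  | 0 => 1
  | 1 => -y
  | n + 2 => -q ^ (n + 1) * y * Bq q y (n + 1) + q ^ n * qInt q (n + 1) * Bq q y n

/-- `v_n(x,y,q)`: `v_0 = x + y` and for `n ≥ 1`,
`v_n = x² + y² + xy(q^{n/2} + q^{-n/2}) - (q^n + q^{-n} - 2)/(q-1)`. -/
noncomputable def vfun (q x y : ℝ) (n : ℕ) : ℝ :=
  if n = 0 then x + y
  else x ^ 2 + y ^ 2 + x * y * (q ^ ((n : ℝ) / 2) + q ^ (-(n : ℝ) / 2))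
    - (q ^ (n : ℝ) + q ^ (-(n : ℝ)) - 2) / (q - 1)

set_option linter.unusedSectionVars false

section basics
variable {q : ℝ} (hq : 1 < q)
include hq

lemma qne1 : q ≠ 1 := ne_of_gt hq
lemma qpos : 0 < q := lt_trans one_pos hq
lemma qm1pos : 0 < q - 1 := by linarith
lemma qm1ne : q - 1 ≠ 0 := ne_of_gt (qm1pos hq)

lemma qInt_eq (n : ℕ) : qInt q n = (q^n - 1)/(q - 1) := by
  rw [qInt, geom_sum_eq (qne1 hq)]

lemma qInt_zero : qInt q 0 = 0 := by simp [qInt]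
lemma qInt_one : qInt q 1 = 1 := by simp [qInt]

lemma qInt_pos (n : ℕ) : 0 < qInt q (n+1) := by
  rw [qInt_eq hq]
  apply div_pos _ (qm1pos hq)
  have : 1 < q^(n+1) := one_lt_pow₀ hq (by omega)
  linarith

lemma qInt_ne (n : ℕ) : qInt q (n+1) ≠ 0 := ne_of_gt (qInt_pos hq n)

lemma qFact_succ (n : ℕ) : qFact q (n+1) = qFact q n * qInt q (n+1) := by
  rw [qFact, qFact, Finset.prod_range_succ]

lemma qFact_pos (n : ℕ) : 0 < qFact q n := by
  induction n with
  | zero => simp [qFact]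
  | succ n ih => rw [qFact_succ hq]; exact mul_pos ih (qInt_pos hq n)

lemma qFact_ne (n : ℕ) : qFact q n ≠ 0 := ne_of_gt (qFact_pos hq n)

lemma qFact_zero : qFact q 0 = 1 := by simp [qFact]

lemma qBinomF_eq {m k r : ℕ} (h : m = k + r) :
    qBinomF q m k = qFact q m / (qFact q k * qFact q r) := by
  subst h; rw [qBinomF, Nat.add_sub_cancel_left]

lemma qBinomF_zero (m : ℕ) : qBinomF q m 0 = 1 := by
  rw [qBinomF_eq hq (show m = 0 + m by omega), qFact_zero hq]
  field_simp [qFact_ne hq]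

lemma qBinomF_self (m : ℕ) : qBinomF q m m = 1 := by
  rw [qBinomF_eq hq (show m = m + 0 by omega), qFact_zero hq]
  field_simp [qFact_ne hq]

lemma qBinomF_one (n : ℕ) : qBinomF q (n+1) 1 = qInt q (n+1) := by
  rw [qBinomF_eq hq (show n+1 = 1 + n by omega), qFact_succ hq,
    show qFact q 1 = 1 by rw [qFact, Finset.prod_range_one, qInt_one hq]]
  field_simp [qFact_ne hq]

lemma qBinomF_succ_self (n : ℕ) : qBinomF q (n+1) n = qInt q (n+1) := by
  rw [qBinomF_eq hq (show n+1 = n + 1 by omega), qFact_succ hq,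
    show qFact q 1 = 1 by rw [qFact, Finset.prod_range_one, qInt_one hq]]
  field_simp [qFact_ne hq]

/-- Pascal: `[b+c+2 choose b+1] = [b+c+1 choose b+1] + q^(c+1) [b+c+1 choose b]`. -/
lemma pascal (b c : ℕ) : qBinomF q (b+c+2) (b+1)
    = qBinomF q (b+c+1) (b+1) + q^(c+1) * qBinomF q (b+c+1) b := by
  rw [qBinomF_eq hq (show b+c+2 = (b+1) + (c+1) by omega),
    qBinomF_eq hq (show b+c+1 = (b+1) + c by omega),
    qBinomF_eq hq (show b+c+1 = b + (c+1) by omega),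
    show b+c+2 = (b+c+1)+1 by omega, qFact_succ hq,
    show b+c+1 = (b+c)+1 by omega, qFact_succ hq,
    qFact_succ hq b, qFact_succ hq c]
  have h1 := qFact_ne hq b
  have h2 := qFact_ne hq c
  have h3 := qFact_ne hq (b+c)
  simp only [qInt_eq hq]
  have h7 : q - 1 ≠ 0 := qm1ne hq
  have h4 : q^(b+1) - 1 ≠ 0 := by
    have : 1 < q^(b+1) := one_lt_pow₀ hq (by omega); linarith
  have h5 : q^(c+1) - 1 ≠ 0 := by
    have : 1 < q^(c+1) := one_lt_pow₀ hq (by omega); linarith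
  have h6 : q^(b+c+1) - 1 ≠ 0 := by
    have : 1 < q^(b+c+1) := one_lt_pow₀ hq (by omega); linarith
  field_simp
  ring

/-- Absorption: `[b+c+1] · [b+c choose b] = [b+1] · [b+c+1 choose b+1]`. -/
lemma absorb (b c : ℕ) : qInt q (b+c+1) * qBinomF q (b+c) b
    = qInt q (b+1) * qBinomF q (b+c+1) (b+1) := by
  rw [qBinomF_eq hq (show b+c = b + c by omega),
    qBinomF_eq hq (show b+c+1 = (b+1) + c by omega),
    show b+c+1 = (b+c)+1 by omega, qFact_succ hq,
    qFact_succ hq b]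
  have h1 := qFact_ne hq b
  have h2 := qFact_ne hq c
  have h3 := qFact_ne hq (b+c)
  have h4 := qInt_ne hq b
  have h5 := qInt_ne hq (b+c)
  field_simp

end basics

section basics2
variable {q : ℝ} (hq : 1 < q)
include hq

/-- Ratio: `[a+c+1 choose a+1]·[a+1] = [a+c+1 choose a]·[c+1]`. -/
lemma ratio (a c : ℕ) : qBinomF q (a+c+1) (a+1) * qInt q (a+1)
    = qBinomF q (a+c+1) a * qInt q (c+1) := by
  rw [qBinomF_eq hq (show a+c+1 = (a+1) + c by omega),
    qBinomF_eq hq (show a+c+1 = a + (c+1) by omega),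
    qFact_succ hq a, qFact_succ hq c]
  have h1 := qFact_ne hq a
  have h2 := qFact_ne hq c
  have h3 := qInt_ne hq a
  have h4 := qInt_ne hq c
  field_simp

/-- Second Pascal: `[b+c+2 choose b+1] = [b+c+1 choose b] + q^(b+1) [b+c+1 choose b+1]`. -/
lemma pascal2 (b c : ℕ) : qBinomF q (b+c+2) (b+1)
    = qBinomF q (b+c+1) b + q^(b+1) * qBinomF q (b+c+1) (b+1) := by
  rw [qBinomF_eq hq (show b+c+2 = (b+1) + (c+1) by omega),
    qBinomF_eq hq (show b+c+1 = (b+1) + c by omega),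
    qBinomF_eq hq (show b+c+1 = b + (c+1) by omega),
    show b+c+2 = (b+c+1)+1 by omega, qFact_succ hq,
    show b+c+1 = (b+c)+1 by omega, qFact_succ hq,
    qFact_succ hq b, qFact_succ hq c]
  have h1 := qFact_ne hq b
  have h2 := qFact_ne hq c
  have h3 := qFact_ne hq (b+c)
  simp only [qInt_eq hq]
  have h7 : q - 1 ≠ 0 := qm1ne hq
  have h4 : q^(b+1) - 1 ≠ 0 := by
    have : 1 < q^(b+1) := one_lt_pow₀ hq (by omega); linarith
  have h5 : q^(c+1) - 1 ≠ 0 := by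
    have : 1 < q^(c+1) := one_lt_pow₀ hq (by omega); linarith
  have h6 : q^(b+c+1) - 1 ≠ 0 := by
    have : 1 < q^(b+c+1) := one_lt_pow₀ hq (by omega); linarith
  field_simp
  ring
end basics2

noncomputable def bet2 (q s t : ℝ) (j : ℕ) : ℝ :=
  ∑ b ∈ Finset.range (j+1), qBinomF q j b * (q^(b*(j-b)))⁻¹ * s^(j-b) * t^b

section betsec
variable {q : ℝ} (hq : 1 < q) (s t : ℝ)
include hq

lemma bet2_zero : bet2 q s t 0 = 1 := by
  simp [bet2, qBinomF_zero hq]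

lemma bet2_one : bet2 q s t 1 = s + t := by
  rw [bet2, Finset.sum_range_succ, Finset.sum_range_one]
  simp [qBinomF_zero hq, qBinomF_self hq]

lemma G2a (n : ℕ) : bet2 q s t (n+1) = s * bet2 q s (q⁻¹*t) n + t * bet2 q s t n := by
  have hqne : q ≠ 0 := ne_of_gt (qpos hq)
  rw [bet2, Finset.sum_range_succ, Finset.sum_range_succ']
  have e1 : ∀ b ∈ Finset.range n,
      qBinomF q (n+1) (b+1) * (q^((b+1)*(n+1-(b+1))))⁻¹ * s^(n+1-(b+1)) * t^(b+1)
      = (qBinomF q n (b+1) * (q^((b+1)*(n-(b+1))))⁻¹ * s^(n-(b+1)) * ((q⁻¹*t)^(b+1))) * s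
        + (qBinomF q n b * (q^(b*(n-b)))⁻¹ * s^(n-b) * t^b) * t := by
    intro b hb
    rw [Finset.mem_range] at hb
    obtain ⟨c, rfl⟩ : ∃ c, n = b + c + 1 := ⟨n - b - 1, by omega⟩
    rw [show b+c+1+1-(b+1) = c+1 by omega, show b+c+1-(b+1) = c by omega,
      show b+c+1-b = c+1 by omega, show (b:ℕ)+c+1+1 = b+c+2 by omega,
      pascal hq b c]
    rw [show (b+1)*(c+1) = b*c + b + c + 1 by ring, show (b+1)*c = b*c + c by ring,
      show b*(c+1) = b*c + b by ring]
    simp only [mul_pow, inv_pow]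
    field_simp
    ring
  rw [Finset.sum_congr rfl e1, Finset.sum_add_distrib, ← Finset.sum_mul, ← Finset.sum_mul]
  rw [bet2, bet2, Finset.sum_range_succ', Finset.sum_range_succ]
  rw [qBinomF_zero hq, qBinomF_zero hq, qBinomF_self hq, qBinomF_self hq]
  simp only [Nat.sub_zero, Nat.sub_self, Nat.zero_mul, Nat.mul_zero, pow_zero, Nat.add_sub_cancel]
  ring

lemma G2b (n : ℕ) : bet2 q s (q⁻¹*t) n
    = bet2 q s t n - (q-1) * (q^n)⁻¹ * qInt q n * t * bet2 q s t (n-1) := by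
  have hqne : q ≠ 0 := ne_of_gt (qpos hq)
  rcases n with _ | n
  · simp [bet2_zero hq, qInt_zero hq]
  · rw [show (n:ℕ)+1-1 = n by omega, eq_sub_iff_add_eq]
    have e1 : ∀ b ∈ Finset.range (n+1),
        qBinomF q (n+1) (b+1) * (q^((b+1)*(n+1-(b+1))))⁻¹ * s^(n+1-(b+1)) * t^(b+1)
        = qBinomF q (n+1) (b+1) * (q^((b+1)*(n+1-(b+1))))⁻¹ * s^(n+1-(b+1)) * ((q⁻¹*t)^(b+1))
          + (q-1) * (q^(n+1))⁻¹ * qInt q (n+1) * t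
            * (qBinomF q n b * (q^(b*(n-b)))⁻¹ * s^(n-b) * t^b) := by
      intro b hb
      rw [Finset.mem_range] at hb
      obtain ⟨c, rfl⟩ : ∃ c, n = b + c := ⟨n - b, by omega⟩
      rw [show b+c+1-(b+1) = c by omega, show b+c-b = c by omega,
        show (b:ℕ)+c+1 = b+c+1 by omega]
      have habs := absorb hq b c
      -- [b+c+1] * [b+c choose b] = [b+1] * [b+c+1 choose b+1]
      rw [mul_comm (qInt q (b+c+1)) (qBinomF q (b+c) b)] at habs
      rw [show qBinomF q (b+c) b * (q ^ (b * c))⁻¹ * s ^ c * t ^ b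
          = (qBinomF q (b+c) b * qInt q (b+c+1)) * (qInt q (b+c+1))⁻¹ * (q ^ (b * c))⁻¹ * s ^ c * t ^ b
          by field_simp [qInt_ne hq (b+c)], habs]
      rw [qInt_eq hq (b+1), qInt_eq hq (b+c+1)]
      have h6 : q^(b+c+1) - 1 ≠ 0 := by
        have : 1 < q^(b+c+1) := one_lt_pow₀ hq (by omega); linarith
      simp only [mul_pow, inv_pow]
      field_simp [qm1ne hq]
      ring
    conv_rhs => rw [bet2, Finset.sum_range_succ', Finset.sum_congr rfl e1,
      Finset.sum_add_distrib]
    conv_lhs => rw [bet2, Finset.sum_range_succ', bet2, Finset.mul_sum]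
    ring

lemma G2 (n : ℕ) : bet2 q s t (n+1) = (s + t) * bet2 q s t n
    - (q-1) * (q^n)⁻¹ * qInt q n * (s*t) * bet2 q s t (n-1) := by
  rw [G2a hq, G2b hq]
  ring

end betsec

section keysec
variable {q u : ℝ} (hq : 1 < q) (hu : 0 < u) (huu : u * u = q) (s t : ℝ)
include hq hu huu

lemma R1 (n : ℕ) : bet2 q (u*s) (u⁻¹*t) n = u^n * bet2 q s (q⁻¹*t) n := by
  have hune : u ≠ 0 := ne_of_gt hu
  rw [bet2, bet2, Finset.mul_sum]
  apply Finset.sum_congr rfl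
  intro b hb
  rw [Finset.mem_range] at hb
  obtain ⟨c, rfl⟩ : ∃ c, n = b + c := ⟨n - b, by omega⟩
  rw [show b+c-b = c by omega, ← huu]
  simp only [mul_pow, inv_pow]
  field_simp
  ring

lemma R1comb (n : ℕ) : bet2 q (u*s) (u⁻¹*t) n
    = u^n * bet2 q s t n - (q-1) * (q^n)⁻¹ * qInt q n * t * u^n * bet2 q s t (n-1) := by
  rw [R1 hq hu huu, G2b hq]
  ring

end keysec

section kgsec
variable {q u : ℝ} (hq : 1 < q) (hu : 0 < u) (huu : u * u = q)
include hq hu huu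

set_option maxHeartbeats 3200000 in
lemma Kg (j' k' : ℕ) (s t : ℝ) (hs : s ≠ 0) (ht : t = -((q-1)*s)⁻¹) :
    (qBinomF q (j'+k'+3) (k'+1) * u^(2*j'+k'+2)) * bet2 q s t (j'+2)
    = (qBinomF q (j'+k'+2) k' * u^(3*j'+k'+4)) * bet2 q (u*s) (u⁻¹*t) (j'+2)
    + (qBinomF q (j'+k'+2) (k'+2) * qInt q (k'+2) * u^(j'+3*k'+4))
        * bet2 q (u*s) (u⁻¹*t) j'
    + (qBinomF q (j'+k'+2) (k'+1) * u^(j'+k'+1))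
        * ((s + u^(2*j'+2*k'+4)*t) * bet2 q (u*s) (u⁻¹*t) (j'+1)) := by
  have hune : u ≠ 0 := ne_of_gt hu
  have hqne : q ≠ 0 := ne_of_gt (qpos hq)
  rw [R1comb hq hu huu s t (j'+2), R1comb hq hu huu s t (j'+1), R1comb hq hu huu s t j']
  simp only [show j'+2-1 = j'+1 from rfl, show j'+1-1 = j' from rfl]
  rw [G2 hq s t (j'+1), G2 hq s t j']
  simp only [show j'+1-1 = j' from rfl]
  rw [show j'+k'+3 = k'+(j'+1)+2 by omega, pascal hq k' (j'+1),
    show k'+(j'+1)+1 = j'+k'+2 by omega]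
  have hB : qBinomF q (j'+k'+2) k'
      = qBinomF q (j'+k'+2) (k'+1) * qInt q (k'+1) / qInt q (j'+2) := by
    rw [eq_div_iff (qInt_ne hq (j'+1))]
    have := ratio hq k' (j'+1)
    rw [show k'+(j'+1)+1 = j'+k'+2 by omega] at this
    linarith [this]
  have hD : qBinomF q (j'+k'+2) (k'+2)
      = qBinomF q (j'+k'+2) (k'+1) * qInt q (j'+1) / qInt q (k'+2) := by
    rw [eq_div_iff (qInt_ne hq (k'+1))]
    have := ratio hq (k'+1) j'
    rw [show k'+1+j'+1 = j'+k'+2 by omega] at this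
    linarith [this]
  rw [hB, hD]
  simp only [qInt_eq hq]
  subst ht
  rw [← huu]
  have hm1 : u*u - 1 ≠ 0 := by rw [huu]; exact qm1ne hq
  have hp0 : (u*u)^j' - 1 ≥ 0 := by
    rw [huu]
    have : 1 ≤ q^j' := one_le_pow₀ (le_of_lt hq)
    linarith
  have hp1 : (u*u)^(j'+1) - 1 ≠ 0 := by
    rw [huu]
    have : 1 < q^(j'+1) := one_lt_pow₀ hq (by omega); linarith
  have hp2 : (u*u)^(j'+2) - 1 ≠ 0 := by
    rw [huu]
    have : 1 < q^(j'+2) := one_lt_pow₀ hq (by omega); linarith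
  have hp3 : (u*u)^(k'+1) - 1 ≠ 0 := by
    rw [huu]
    have : 1 < q^(k'+1) := one_lt_pow₀ hq (by omega); linarith
  have hp4 : (u*u)^(k'+2) - 1 ≠ 0 := by
    rw [huu]
    have : 1 < q^(k'+2) := one_lt_pow₀ hq (by omega); linarith
  simp only [← sq] at hm1 hp0 hp1 hp2 hp3 hp4
  field_simp
  ring
end kgsec

section k01sec
variable {q u : ℝ} (hq : 1 < q) (hu : 0 < u) (huu : u * u = q)
include hq hu huu

set_option maxHeartbeats 1600000 in
lemma K0 (j' : ℕ) (s t : ℝ) (hs : s ≠ 0) (ht : t = -((q-1)*s)⁻¹) :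
    u^(2*j'+1) * bet2 q s t (j'+2)
    = (qBinomF q (j'+1) 1 * qInt q 1 * u^(j'+1)) * bet2 q (u*s) (u⁻¹*t) j'
    + (qBinomF q (j'+1) 0 * u^(j')) * ((s + u^(2*j'+2)*t) * bet2 q (u*s) (u⁻¹*t) (j'+1)) := by
  have hune : u ≠ 0 := ne_of_gt hu
  have hqne : q ≠ 0 := ne_of_gt (qpos hq)
  rw [R1comb hq hu huu s t (j'+1), R1comb hq hu huu s t j']
  simp only [show j'+1-1 = j' from rfl]
  rw [G2 hq s t (j'+1), G2 hq s t j']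
  simp only [show j'+1-1 = j' from rfl]
  rw [qBinomF_one hq, qBinomF_zero hq, qInt_one hq]
  simp only [qInt_eq hq]
  subst ht
  rw [← huu]
  have hm1 : u*u - 1 ≠ 0 := by rw [huu]; exact qm1ne hq
  have hp1 : (u*u)^(j'+1) - 1 ≠ 0 := by
    rw [huu]
    have : 1 < q^(j'+1) := one_lt_pow₀ hq (by omega); linarith
  have hp2 : (u*u)^(j'+2) - 1 ≠ 0 := by
    rw [huu]
    have : 1 < q^(j'+2) := one_lt_pow₀ hq (by omega); linarith
  field_simp
  ring

lemma K1 (M : ℕ) (s t : ℝ) (hs : s ≠ 0) (ht : t = -((q-1)*s)⁻¹) :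
    (qBinomF q (M+2) (M+1) * u^(M+1)) * bet2 q s t 1
    = (qBinomF q (M+1) M * u^(M+2)) * bet2 q (u*s) (u⁻¹*t) 1
    + qBinomF q (M+1) (M+1) * u^(M+1)
        * ((s + u^(2*M+2)*t) * bet2 q (u*s) (u⁻¹*t) 0) := by
  have hune : u ≠ 0 := ne_of_gt hu
  have hqne : q ≠ 0 := ne_of_gt (qpos hq)
  rw [bet2_one hq, bet2_one hq, bet2_zero hq, qBinomF_succ_self hq, qBinomF_succ_self hq,
    qBinomF_self hq]
  simp only [qInt_eq hq]
  subst ht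
  rw [← huu]
  have hm1 : u*u - 1 ≠ 0 := by rw [huu]; exact qm1ne hq
  simp only [← sq] at hm1
  field_simp
  ring

/-- Divided form of `Kg`, matching the assembly call-site shapes. -/
lemma KgD (j' k' : ℕ) (s t : ℝ) (hs : s ≠ 0) (ht : t = -((q-1)*s)⁻¹) :
    qBinomF q (j'+k'+3) (k'+1) * (u^((j'+2)*(k'+1)))⁻¹ * bet2 q s t (j'+2)
    = qBinomF q (j'+k'+2) k' * (u^((j'+2)*k'))⁻¹ * bet2 q (u*s) (u⁻¹*t) (j'+2)
    + qBinomF q (j'+k'+2) (k'+2) * (u^(j'*(k'+2)))⁻¹ * bet2 q (u*s) (u⁻¹*t) j'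
        * qInt q (k'+2)
    + ((u^(j'+k'+2))⁻¹*s + u^(j'+k'+2)*t)
        * (qBinomF q (j'+k'+2) (k'+1) * (u^((j'+1)*(k'+1)))⁻¹
            * bet2 q (u*s) (u⁻¹*t) (j'+1)) := by
  have hune : u ≠ 0 := ne_of_gt hu
  have key := Kg hq hu huu j' k' s t hs ht
  set W : ℝ := (u^((j'+2)*(k'+1) + (2*j'+k'+2)))⁻¹ with hW
  have w1 : (u^((j'+2)*(k'+1)))⁻¹ = u^(2*j'+k'+2) * W := by
    rw [hW, show (j'+2)*(k'+1) + (2*j'+k'+2) = (2*j'+k'+2) + ((j'+2)*(k'+1)) from by ring,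
      pow_add]
    field_simp
    try ring
  have w2 : (u^((j'+2)*k'))⁻¹ = u^(3*j'+k'+4) * W := by
    rw [hW, show (j'+2)*(k'+1) + (2*j'+k'+2) = (3*j'+k'+4) + ((j'+2)*k') from by ring,
      pow_add]
    field_simp
    try ring
  have w3 : (u^(j'*(k'+2)))⁻¹ = u^(j'+3*k'+4) * W := by
    rw [hW, show (j'+2)*(k'+1) + (2*j'+k'+2) = (j'+3*k'+4) + (j'*(k'+2)) from by ring,
      pow_add]
    field_simp
    try ring
  have w4 : ((u^(j'+k'+2))⁻¹*s + u^(j'+k'+2)*t) * (u^((j'+1)*(k'+1)))⁻¹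
      = (s + u^(2*j'+2*k'+4)*t) * (u^(j'+k'+1) * W) := by
    rw [hW, show (j'+2)*(k'+1) + (2*j'+k'+2) = (j'+k'+1) + ((j'+1)*(k'+1)) + (j'+k'+2)
        from by ring, pow_add, pow_add, show 2*j'+2*k'+4 = (j'+k'+2)+(j'+k'+2) from by ring,
      pow_add]
    field_simp
    ring
  rw [w1, w2, w3]
  rw [show ((u^(j'+k'+2))⁻¹*s + u^(j'+k'+2)*t)
      * (qBinomF q (j'+k'+2) (k'+1) * (u^((j'+1)*(k'+1)))⁻¹
        * bet2 q (u*s) (u⁻¹*t) (j'+1))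
      = (((u^(j'+k'+2))⁻¹*s + u^(j'+k'+2)*t) * (u^((j'+1)*(k'+1)))⁻¹)
        * (qBinomF q (j'+k'+2) (k'+1) * bet2 q (u*s) (u⁻¹*t) (j'+1)) from by ring, w4]
  linear_combination W * key

end k01sec

noncomputable def Uf (q u x s t : ℝ) (m : ℕ) : ℝ :=
  ∑ k ∈ Finset.range (m+1),
    qBinomF q m k * (u^((m-k)*k))⁻¹ * bet2 q s t (m-k) * Hq q x k

lemma xH (q x : ℝ) (k : ℕ) :
    x * Hq q x k = Hq q x (k+1) + qInt q k * Hq q x (k-1) := by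
  cases k with
  | zero => simp [Hq, qInt]
  | succ n =>
    show x * Hq q x (n+1) = Hq q x (n+2) + qInt q (n+1) * Hq q x n
    rw [Hq]
    ring

section mainsec
variable {q u : ℝ} (hq : 1 < q) (hu : 0 < u) (huu : u * u = q) (x : ℝ)
include hq hu huu

/-- Divided form of `K0`. -/
lemma K0D (j' : ℕ) (s t : ℝ) (hs : s ≠ 0) (ht : t = -((q-1)*s)⁻¹) :
    bet2 q s t (j'+2)
    = qBinomF q (j'+1) 1 * (u^(j'))⁻¹ * bet2 q (u*s) (u⁻¹*t) j' * qInt q 1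
    + ((u^(j'+1))⁻¹*s + u^(j'+1)*t)
        * (qBinomF q (j'+1) 0 * bet2 q (u*s) (u⁻¹*t) (j'+1)) := by
  have hune : u ≠ 0 := ne_of_gt hu
  have key := K0 hq hu huu j' s t hs ht
  set W : ℝ := (u^(2*j'+1))⁻¹ with hW
  have w2 : (u^(j'):ℝ)⁻¹ = u^(j'+1) * W := by
    rw [hW, show 2*j'+1 = (j'+1) + j' from by ring, pow_add]
    field_simp
    try ring
  have w3 : ((u^(j'+1))⁻¹*s + u^(j'+1)*t) = (s + u^(2*j'+2)*t) * (u^(j') * W) := by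
    rw [hW, show 2*j'+1 = j' + (j'+1) from by ring, pow_add,
      show 2*j'+2 = (j'+1)+(j'+1) from by ring, pow_add]
    field_simp
    ring
  rw [w2, w3]
  calc bet2 q s t (j'+2) = (u^(2*j'+1) * bet2 q s t (j'+2)) * W := by
        rw [hW]; field_simp
    _ = _ := by linear_combination W * key

/-- Divided form of `K1`. -/
lemma K1D (M : ℕ) (s t : ℝ) (hs : s ≠ 0) (ht : t = -((q-1)*s)⁻¹) :
    qBinomF q (M+2) (M+1) * (u^(M+1))⁻¹ * bet2 q s t 1
    = qBinomF q (M+1) M * (u^(M))⁻¹ * bet2 q (u*s) (u⁻¹*t) 1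
    + ((u^(M+1))⁻¹*s + u^(M+1)*t)
        * (qBinomF q (M+1) (M+1) * bet2 q (u*s) (u⁻¹*t) 0) := by
  have hune : u ≠ 0 := ne_of_gt hu
  have key := K1 hq hu huu M s t hs ht
  set W : ℝ := (u^(2*M+2))⁻¹ with hW
  have w1 : ((u^(M+1):ℝ))⁻¹ = u^(M+1) * W := by
    rw [hW, show 2*M+2 = (M+1) + (M+1) from by ring, pow_add]
    field_simp
    try ring
  have w2 : ((u^(M):ℝ))⁻¹ = u^(M+2) * W := by
    rw [hW, show 2*M+2 = (M+2) + M from by ring, pow_add]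
    field_simp
    try ring
  have w3 : ((u^(M+1))⁻¹*s + u^(M+1)*t) = (s + u^(2*M+2)*t) * (u^(M+1) * W) := by
    rw [hW, show 2*M+2 = (M+1) + (M+1) from by ring, pow_add]
    field_simp
    ring
  rw [w3, w1, w2]
  linear_combination W * key

set_option maxHeartbeats 1600000 in
lemma Ustep (m : ℕ) (s t : ℝ) (hs : s ≠ 0) (ht : t = -((q-1)*s)⁻¹) :
    Uf q u x s t (m+1)
      = (x + (u^m)⁻¹*s + u^m*t) * Uf q u x (u*s) (u⁻¹*t) m := by
  have hune : u ≠ 0 := ne_of_gt hu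
  rcases m with _ | M
  · rw [Uf, Uf, Finset.sum_range_succ, Finset.sum_range_one, Finset.sum_range_one]
    simp only [Nat.sub_self, Nat.sub_zero, Nat.mul_zero, Nat.zero_mul, pow_zero, inv_one]
    rw [qBinomF_zero hq, qBinomF_self hq, qBinomF_self hq, bet2_zero hq, bet2_one hq,
      bet2_zero hq]
    have h0 : Hq q x 0 = 1 := rfl
    have h1 : Hq q x 1 = x := rfl
    rw [h0, h1]
    ring
  · -- m = M+1
    have hsplit : ∀ k ∈ Finset.range (M+2),
        (x + (u^(M+1))⁻¹*s + u^(M+1)*t)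
          * (qBinomF q (M+1) k * (u^((M+1-k)*k))⁻¹ * bet2 q (u*s) (u⁻¹*t) (M+1-k)
              * Hq q x k)
        = qBinomF q (M+1) (k) * (u^((M+1-(k))*(k)))⁻¹ * bet2 q (u*s) (u⁻¹*t) (M+1-(k)) * Hq q x (k+1)
          + qBinomF q (M+1) (k) * (u^((M+1-(k))*(k)))⁻¹ * bet2 q (u*s) (u⁻¹*t) (M+1-(k)) * (qInt q (k) * Hq q x (k-1))
          + ((u^(M+1))⁻¹*s + u^(M+1)*t) * (qBinomF q (M+1) (k) * (u^((M+1-(k))*(k)))⁻¹ * bet2 q (u*s) (u⁻¹*t) (M+1-(k)) * Hq q x (k)) := by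
      intro k _
      linear_combination
        (qBinomF q (M+1) (k) * (u^((M+1-(k))*(k)))⁻¹ * bet2 q (u*s) (u⁻¹*t) (M+1-(k)))
          * xH q x k
    rw [Uf, Uf, Finset.mul_sum, Finset.sum_congr rfl hsplit, Finset.sum_add_distrib,
      Finset.sum_add_distrib, Finset.sum_range_succ, Finset.sum_range_succ,
      Finset.sum_range_succ']
    have hSa : ∑ k ∈ Finset.range (M+2), (qBinomF q (M+1) (k) * (u^((M+1-(k))*(k)))⁻¹ * bet2 q (u*s) (u⁻¹*t) (M+1-(k)) * Hq q x (k+1))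
        = (∑ k ∈ Finset.range M, (qBinomF q (M+1) (k) * (u^((M+1-(k))*(k)))⁻¹ * bet2 q (u*s) (u⁻¹*t) (M+1-(k)) * Hq q x (k+1))) + (qBinomF q (M+1) (M) * (u^((M+1-(M))*(M)))⁻¹ * bet2 q (u*s) (u⁻¹*t) (M+1-(M)) * Hq q x (M+1)) + (qBinomF q (M+1) (M+1) * (u^((M+1-(M+1))*(M+1)))⁻¹ * bet2 q (u*s) (u⁻¹*t) (M+1-(M+1)) * Hq q x (M+1+1)) := by
      rw [Finset.sum_range_succ, Finset.sum_range_succ]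
      try ring
    have hSb : ∑ k ∈ Finset.range (M+2), (qBinomF q (M+1) (k) * (u^((M+1-(k))*(k)))⁻¹ * bet2 q (u*s) (u⁻¹*t) (M+1-(k)) * (qInt q (k) * Hq q x (k-1)))
        = (∑ k ∈ Finset.range M, (qBinomF q (M+1) (k+1+1) * (u^((M+1-(k+1+1))*(k+1+1)))⁻¹ * bet2 q (u*s) (u⁻¹*t) (M+1-(k+1+1)) * (qInt q (k+1+1) * Hq q x (k+1+1-1)))) + (qBinomF q (M+1) (0+1) * (u^((M+1-(0+1))*(0+1)))⁻¹ * bet2 q (u*s) (u⁻¹*t) (M+1-(0+1)) * (qInt q (0+1) * Hq q x (0+1-1))) + (qBinomF q (M+1) (0) * (u^((M+1-(0))*(0)))⁻¹ * bet2 q (u*s) (u⁻¹*t) (M+1-(0)) * (qInt q (0) * Hq q x (0-1))) := by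
      rw [Finset.sum_range_succ', Finset.sum_range_succ']
      try ring
    have hSc : ∑ k ∈ Finset.range (M+2), (((u^(M+1))⁻¹*s + u^(M+1)*t) * (qBinomF q (M+1) (k) * (u^((M+1-(k))*(k)))⁻¹ * bet2 q (u*s) (u⁻¹*t) (M+1-(k)) * Hq q x (k)))
        = (∑ k ∈ Finset.range M, (((u^(M+1))⁻¹*s + u^(M+1)*t) * (qBinomF q (M+1) (k+1) * (u^((M+1-(k+1))*(k+1)))⁻¹ * bet2 q (u*s) (u⁻¹*t) (M+1-(k+1)) * Hq q x (k+1)))) + (((u^(M+1))⁻¹*s + u^(M+1)*t) * (qBinomF q (M+1) (M+1) * (u^((M+1-(M+1))*(M+1)))⁻¹ * bet2 q (u*s) (u⁻¹*t) (M+1-(M+1)) * Hq q x (M+1))) + (((u^(M+1))⁻¹*s + u^(M+1)*t) * (qBinomF q (M+1) (0) * (u^((M+1-(0))*(0)))⁻¹ * bet2 q (u*s) (u⁻¹*t) (M+1-(0)) * Hq q x (0))) := by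
      rw [Finset.sum_range_succ, Finset.sum_range_succ']
      try ring
    rw [hSa, hSb, hSc]
    have hcore : ∀ n ∈ Finset.range M,
        qBinomF q (M+2) (n+1) * (u^((M+2-(n+1))*(n+1)))⁻¹ * bet2 q s t (M+2-(n+1)) * Hq q x (n+1)
        = (qBinomF q (M+1) (n) * (u^((M+1-(n))*(n)))⁻¹ * bet2 q (u*s) (u⁻¹*t) (M+1-(n)) * Hq q x (n+1)) + (qBinomF q (M+1) (n+1+1) * (u^((M+1-(n+1+1))*(n+1+1)))⁻¹ * bet2 q (u*s) (u⁻¹*t) (M+1-(n+1+1)) * (qInt q (n+1+1) * Hq q x (n+1+1-1))) + (((u^(M+1))⁻¹*s + u^(M+1)*t) * (qBinomF q (M+1) (n+1) * (u^((M+1-(n+1))*(n+1)))⁻¹ * bet2 q (u*s) (u⁻¹*t) (M+1-(n+1)) * Hq q x (n+1))) := by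
      intro n hn
      rw [Finset.mem_range] at hn
      obtain ⟨j', rfl⟩ : ∃ j', M = n + j' + 1 := ⟨M - n - 1, by omega⟩
      rw [show n+j'+1+2-(n+1) = j'+2 by omega,
        show n+j'+1+1-n = j'+2 by omega,
        show n+j'+1+1-(n+1+1) = j' by omega,
        show n+j'+1+1-(n+1) = j'+1 by omega,
        show n+j'+1+2 = j'+n+3 by omega,
        show n+j'+1+1 = j'+n+2 by omega,
        show (n:ℕ)+1+1 = n+2 from rfl, show (n:ℕ)+1+1-1 = n+1 from rfl]
      have key := KgD hq hu huu j' n s t hs ht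
      linear_combination (Hq q x (n+1)) * key
    rw [Finset.sum_congr rfl hcore, Finset.sum_add_distrib, Finset.sum_add_distrib]
    have hB0 : qBinomF q (M+2) (0) * (u^((M+2-(0))*(0)))⁻¹ * bet2 q s t (M+2-(0)) * Hq q x (0) = (qBinomF q (M+1) (0+1) * (u^((M+1-(0+1))*(0+1)))⁻¹ * bet2 q (u*s) (u⁻¹*t) (M+1-(0+1)) * (qInt q (0+1) * Hq q x (0+1-1))) + (((u^(M+1))⁻¹*s + u^(M+1)*t) * (qBinomF q (M+1) (0) * (u^((M+1-(0))*(0)))⁻¹ * bet2 q (u*s) (u⁻¹*t) (M+1-(0)) * Hq q x (0))) := by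
      rw [show (M+2-0)*0 = 0 by omega, show M+2-0 = M+2 by omega,
        show M+1-(0+1) = M by omega, show M*(0+1) = M by omega,
        show (M+1-0)*0 = 0 by omega, show M+1-0 = M+1 by omega,
        show (0:ℕ)+1-1 = 0 from rfl, show (0:ℕ)+1 = 1 from rfl]
      have key := K0D hq hu huu M s t hs ht
      rw [qBinomF_zero hq]
      simp only [pow_zero, inv_one, pow_one, Nat.mul_one]
      linear_combination (Hq q x 0) * key
    have hK1b : qBinomF q (M+2) (M+1) * (u^((M+2-(M+1))*(M+1)))⁻¹ * bet2 q s t (M+2-(M+1)) * Hq q x (M+1) = (qBinomF q (M+1) (M) * (u^((M+1-(M))*(M)))⁻¹ * bet2 q (u*s) (u⁻¹*t) (M+1-(M)) * Hq q x (M+1)) + (((u^(M+1))⁻¹*s + u^(M+1)*t) * (qBinomF q (M+1) (M+1) * (u^((M+1-(M+1))*(M+1)))⁻¹ * bet2 q (u*s) (u⁻¹*t) (M+1-(M+1)) * Hq q x (M+1))) := by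
      rw [show M+2-(M+1) = 1 by omega, show 1*(M+1) = M+1 by omega,
        show M+1-M = 1 by omega, show 1*M = M by omega,
        show M+1-(M+1) = 0 by omega, show 0*(M+1) = 0 by omega]
      have key := K1D hq hu huu M s t hs ht
      simp only [pow_zero, inv_one]
      linear_combination (Hq q x (M+1)) * key
    have hK2 : qBinomF q (M+2) (M+2) * (u^((M+2-(M+2))*(M+2)))⁻¹ * bet2 q s t (M+2-(M+2)) * Hq q x (M+2) = (qBinomF q (M+1) (M+1) * (u^((M+1-(M+1))*(M+1)))⁻¹ * bet2 q (u*s) (u⁻¹*t) (M+1-(M+1)) * Hq q x (M+1+1)) := by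
      rw [show M+2-(M+2) = 0 by omega, show 0*(M+2) = 0 by omega,
        show M+1-(M+1) = 0 by omega, show 0*(M+1) = 0 by omega]
      rw [qBinomF_self hq, qBinomF_self hq, bet2_zero hq, bet2_zero hq]
    rw [hB0, hK1b, hK2, qInt_zero hq]
    ring
end mainsec

noncomputable def facP (q u x s t : ℝ) (m : ℕ) : ℝ :=
  ∏ j ∈ Finset.range m, (x + u^((m:ℤ)-1-2*j)*s + u^(-((m:ℤ)-1-2*j))*t)

section prodsec
variable {q u : ℝ} (hq : 1 < q) (hu : 0 < u) (huu : u * u = q) (x : ℝ)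
include hq hu huu

lemma facP_succ (m : ℕ) (s t : ℝ) :
    facP q u x s t (m+1) = (x + (u^m)⁻¹*s + u^m*t) * facP q u x (u*s) (u⁻¹*t) m := by
  have hune : u ≠ 0 := ne_of_gt hu
  rw [facP, facP, Finset.prod_range_succ]
  rw [show ((m+1 : ℕ):ℤ)-1-2*(m:ℤ) = -(m:ℤ) by push_cast; ring]
  rw [show (-(-(m:ℤ))) = (m:ℤ) by ring]
  rw [zpow_neg, zpow_natCast]
  rw [mul_comm]
  congr 1
  apply Finset.prod_congr rfl
  intro j hj
  have e1 : ((m+1:ℕ):ℤ)-1-2*(j:ℤ) = ((m:ℤ)-1-2*(j:ℤ)) + 1 := by push_cast; ring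
  rw [e1, zpow_add_one₀ hune, show (-(((m:ℤ)-1-2*(j:ℤ)) + 1)) = (-((m:ℤ)-1-2*(j:ℤ))) + (-1) by ring,
    zpow_add₀ hune, zpow_neg_one]
  ring

lemma facP_two_step (m : ℕ) (s t : ℝ) :
    facP q u x s t (m+2)
      = ((x + u^((m:ℤ)+1)*s + u^(-((m:ℤ)+1))*t) * (x + u^(-((m:ℤ)+1))*s + u^((m:ℤ)+1)*t))
        * facP q u x s t m := by
  rw [facP, Finset.prod_range_succ', Finset.prod_range_succ]
  rw [show ((m+2 : ℕ):ℤ)-1-2*((0:ℕ):ℤ) = (m:ℤ)+1 by push_cast; ring]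
  rw [show ((m+2 : ℕ):ℤ)-1-2*(((m+1:ℕ)):ℤ) = -((m:ℤ)+1) by push_cast; ring]
  rw [show (-(-((m:ℤ)+1))) = (m:ℤ)+1 by ring]
  rw [facP]
  have : ∀ j ∈ Finset.range m,
      (x + u^(((m+2:ℕ):ℤ)-1-2*((j+1:ℕ):ℤ))*s + u^(-(((m+2:ℕ):ℤ)-1-2*((j+1:ℕ):ℤ)))*t)
      = (x + u^((m:ℤ)-1-2*(j:ℤ))*s + u^(-((m:ℤ)-1-2*(j:ℤ)))*t) := by
    intro j hj
    rw [show ((m+2:ℕ):ℤ)-1-2*((j+1:ℕ):ℤ) = (m:ℤ)-1-2*(j:ℤ) by push_cast; ring]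
  rw [Finset.prod_congr rfl this]
  ring

lemma rpow_half (N : ℕ) : q ^ ((N:ℝ)/2) = u^N := by
  have h0 : (0:ℝ) ≤ q := le_of_lt (qpos hq)
  have hu' : u = Real.sqrt q := by
    rw [← huu]; rw [Real.sqrt_mul_self (le_of_lt hu)]
  rw [show ((N:ℝ)/2) = (1/2)*(N:ℝ) by ring, Real.rpow_mul h0, ← Real.sqrt_eq_rpow,
    Real.rpow_natCast, hu']

lemma rpow_neg_half (N : ℕ) : q ^ (-(N:ℝ)/2) = (u^N)⁻¹ := by
  rw [show (-(N:ℝ)/2) = -((N:ℝ)/2) by ring, Real.rpow_neg (le_of_lt (qpos hq)),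
    rpow_half hq hu huu]

lemma pair_vfun (m : ℕ) (s t : ℝ) (hs : s ≠ 0) (ht : t = -((q-1)*s)⁻¹) :
    (x + u^((m:ℤ)+1)*s + u^(-((m:ℤ)+1))*t) * (x + u^(-((m:ℤ)+1))*s + u^((m:ℤ)+1)*t)
      = vfun q x (s+t) (m+1) := by
  have hune : u ≠ 0 := ne_of_gt hu
  have hqne : q ≠ 0 := ne_of_gt (qpos hq)
  rw [vfun, if_neg (by omega : ¬ (m+1 = 0))]
  rw [rpow_half hq hu huu (m+1)]
  rw [show (-((m+1:ℕ):ℝ)/2) = -(((m+1:ℕ)):ℝ)/2 by ring, rpow_neg_half hq hu huu (m+1)]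
  rw [Real.rpow_natCast, show (-((m+1:ℕ):ℝ)) = -(((m+1:ℕ)):ℝ) by ring,
    Real.rpow_neg (le_of_lt (qpos hq)), Real.rpow_natCast]
  rw [show ((m:ℤ)+1) = ((m+1:ℕ):ℤ) by push_cast; ring, show (-((m+1:ℕ):ℤ)) = -((m+1:ℕ):ℤ) from rfl,
    zpow_neg, zpow_natCast]
  subst ht
  rw [← huu]
  have hm1 : u*u - 1 ≠ 0 := by rw [huu]; exact qm1ne hq
  field_simp
  ring

lemma facP_even (s t : ℝ) (hs : s ≠ 0) (ht : t = -((q-1)*s)⁻¹) : ∀ i : ℕ,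
    facP q u x s t (2*i) = ∏ j ∈ Finset.Icc 1 i, vfun q x (s+t) (2*j-1) := by
  intro i
  induction i with
  | zero => simp [facP]
  | succ i ih =>
    rw [show 2*(i+1) = 2*i+2 by ring, facP_two_step hq hu huu x, ih,
      Finset.prod_Icc_succ_top (by omega : 1 ≤ i+1),
      show 2*(i+1)-1 = 2*i+1 by omega,
      pair_vfun hq hu huu x (2*i) s t hs ht]
    rw [show 2*i+1 = 2*i+1 from rfl]
    ring

lemma facP_odd (s t : ℝ) (hs : s ≠ 0) (ht : t = -((q-1)*s)⁻¹) : ∀ i : ℕ,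
    facP q u x s t (2*i+1) = ∏ j ∈ Finset.range (i+1), vfun q x (s+t) (2*j) := by
  intro i
  induction i with
  | zero =>
    rw [facP, Finset.prod_range_one, Finset.prod_range_one]
    rw [show ((1:ℕ):ℤ)-1-2*((0:ℕ):ℤ) = 0 by norm_num]
    rw [show (-(0:ℤ)) = 0 from rfl, zpow_zero]
    rw [show 2*0 = 0 from rfl, vfun, if_pos rfl]
    ring
  | succ i ih =>
    have e1 : 2*(i+1)+1 = (2*i+1)+2 := by omega
    have e2 : 2*(i+1) = 2*i+1+1 := by omega
    rw [e1, facP_two_step hq hu huu x, ih, pair_vfun hq hu huu x (2*i+1) s t hs ht]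
    conv_rhs => rw [Finset.prod_range_succ]
    rw [e2]
    ring

end prodsec

section finsec
variable {q u : ℝ} (hq : 1 < q) (hu : 0 < u) (huu : u * u = q) (x : ℝ)
include hq hu huu

lemma Ufact : ∀ (m : ℕ) (s t : ℝ), s ≠ 0 → t = -((q-1)*s)⁻¹ →
    Uf q u x s t m = facP q u x s t m := by
  intro m
  induction m with
  | zero =>
    intro s t hs ht
    rw [Uf, facP, Finset.sum_range_one, Finset.range_zero, Finset.prod_empty]
    rw [show (0:ℕ)-0 = 0 from rfl, show ((0:ℕ)-0)*0 = 0 from rfl, qBinomF_zero hq,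
      bet2_zero hq, pow_zero, inv_one]
    show 1 * 1 * 1 * 1 = 1
    norm_num
  | succ m ih =>
    intro s t hs ht
    have hune : u ≠ 0 := ne_of_gt hu
    have hs' : u * s ≠ 0 := mul_ne_zero hune hs
    have ht' : u⁻¹ * t = -((q-1)*(u*s))⁻¹ := by
      rw [ht]
      field_simp
    rw [Ustep hq hu huu x m s t hs ht, ih (u*s) (u⁻¹*t) hs' ht',
      facP_succ hq hu huu x m s t]

lemma Bq_bet (s t : ℝ) (hs : s ≠ 0) (ht : t = -((q-1)*s)⁻¹) (y : ℝ) (hy : y = -(s+t)) :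
    ∀ j, Bq q y j = u^(j*(j-1)) * bet2 q s t j := by
  have hqne : q ≠ 0 := ne_of_gt (qpos hq)
  have hune : u ≠ 0 := ne_of_gt hu
  suffices h : ∀ j, Bq q y j = u^(j*(j-1)) * bet2 q s t j
      ∧ Bq q y (j+1) = u^((j+1)*j) * bet2 q s t (j+1) by
    exact fun j => (h j).1
  intro j
  induction j with
  | zero =>
    constructor
    · show Bq q y 0 = u^0 * bet2 q s t 0
      rw [Bq, bet2_zero hq, pow_zero]
      norm_num
    · show Bq q y 1 = u^(1*0) * bet2 q s t 1
      rw [Bq, bet2_one hq, hy]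
      norm_num
  | succ n ih =>
    refine ⟨ih.2, ?_⟩
    show Bq q y (n+2) = u^((n+2)*(n+1)) * bet2 q s t (n+2)
    have hpow1 : (u:ℝ)^((n+2)*(n+1)) = q^(n+1) * u^((n+1)*n) := by
      rw [show (n+2)*(n+1) = 2*(n+1) + (n+1)*n by ring, pow_add, pow_mul, pow_two, huu]
    have hpow2 : (u:ℝ)^((n+1)*n) = q^n * u^(n*(n-1)) := by
      have hee : (n+1)*n = 2*n + n*(n-1) := by
        rcases n with _ | k
        · norm_num
        · simp only [show k+1-1 = k from rfl]
          ring
      rw [hee, pow_add, pow_mul, pow_two, huu]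
    rw [Bq, G2 hq s t (n+1)]
    simp only [show n+1-1 = n from rfl]
    rw [ih.1, ih.2, hy, hpow1, hpow2, ht]
    have hm1 : q - 1 ≠ 0 := qm1ne hq
    field_simp
    ring
end finsec

theorem stmt5 (m : ℕ) (hm : 1 ≤ m) (q : ℝ) (hq1 : 1 < q) (x y : ℝ) :
    (∀ i : ℕ, m = 2 * i →
      ∑ k ∈ Finset.range (m + 1),
          qBinomF q m k * q ^ (-(((m - 1) * (m - k) : ℕ) : ℝ) / 2) * Bq q y (m - k) * Hq q x k
        = ∏ j ∈ Finset.Icc 1 i, vfun q x (-y) (2 * j - 1)) ∧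
    (∀ i : ℕ, m = 2 * i + 1 →
      ∑ k ∈ Finset.range (m + 1),
          qBinomF q m k * q ^ (-(((m - 1) * (m - k) : ℕ) : ℝ) / 2) * Bq q y (m - k) * Hq q x k
        = ∏ j ∈ Finset.range (i + 1), vfun q x (-y) (2 * j)) := by
  have hq0 : 0 < q := qpos hq1
  have hm1 : 0 < q - 1 := qm1pos hq1
  set u : ℝ := Real.sqrt q with hudef
  have hu : 0 < u := Real.sqrt_pos.mpr hq0
  have huu : u * u = q := Real.mul_self_sqrt (le_of_lt hq0)
  have hune : u ≠ 0 := ne_of_gt hu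
  -- choose s
  set D : ℝ := Real.sqrt ((q-1)^2*y^2 + 4*(q-1)) with hDdef
  have hD2 : D^2 = (q-1)^2*y^2 + 4*(q-1) := by
    rw [hDdef, Real.sq_sqrt (by positivity)]
  set s : ℝ := (-(q-1)*y + D)/(2*(q-1)) with hsdef
  have hDpos : 0 < D := by
    rw [hDdef]
    apply Real.sqrt_pos.mpr
    positivity
  have hs : s ≠ 0 := by
    rw [hsdef]
    intro h
    have h2 : -(q-1)*y + D = 0 := by
      field_simp at h
      linarith [h]
    have : D = (q-1)*y := by linarith
    rw [this] at hD2
    nlinarith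
  set t : ℝ := -((q-1)*s)⁻¹ with htdef
  have ht : t = -((q-1)*s)⁻¹ := htdef
  have hrel : (q-1)*s^2 + (q-1)*y*s - 1 = 0 := by
    rw [hsdef]
    field_simp
    nlinarith [hD2]
  have hy : y = -(s+t) := by
    rw [htdef]
    have hqs : (q-1)*s ≠ 0 := mul_ne_zero (ne_of_gt hm1) hs
    field_simp
    nlinarith [hrel]
  -- sum = Uf
  have hsum : ∑ k ∈ Finset.range (m + 1),
      qBinomF q m k * q ^ (-(((m - 1) * (m - k) : ℕ) : ℝ) / 2) * Bq q y (m - k) * Hq q x k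
      = Uf q u x s t m := by
    rw [Uf]
    apply Finset.sum_congr rfl
    intro k hk
    rw [Finset.mem_range] at hk
    have hkm : k ≤ m := by omega
    rw [rpow_neg_half hq1 hu huu ((m-1)*(m-k)), Bq_bet hq1 hu huu s t hs ht y hy (m-k)]
    have hexp : (m-1)*(m-k) = (m-k)*((m-k)-1) + (m-k)*k := by
      obtain ⟨j, rfl⟩ : ∃ j, m = k + j := ⟨m - k, by omega⟩
      rw [show k+j-k = j by omega]
      rcases j with _ | j'
      · norm_num
      · rw [show k+(j'+1)-1 = k+j' by omega, show j'+1-1 = j' by omega]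
        ring
    rw [hexp, pow_add]
    field_simp
  have hUP := Ufact hq1 hu huu x m s t hs ht
  constructor
  · intro i him
    rw [hsum, hUP, him, facP_even hq1 hu huu x s t hs ht i]
    apply Finset.prod_congr rfl
    intro j _
    rw [show -y = s + t from by rw [hy]; ring]
  · intro i him
    rw [hsum, hUP, him, facP_odd hq1 hu huu x s t hs ht i]
    apply Finset.prod_congr rfl
    intro j _
    rw [show -y = s + t from by rw [hy]; ring]
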